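/- Let f_i be convex lower semicontinuous, and let {x_k} be generated by MAPG-1: y_k = x_k + ((k−1)/(k+α−1))(x_k − x_{k−1}), x_{k+1} = argmin_z { max_i(f_i(z)−f_i(x_k)) + (1/(2λ_k))‖z−y_k‖² } with λ_k = kβ_k/(k+α−1), β_{k+1} = (k(k+α−1)/(k+1)²)β_k, α ≥ 1, x₀ = x₁. Then for every i and every k ≥ 0, f_i(x_k) ≤ f_i(x₀); i.e., the iterates stay in the level set L(f, f(x₀)). -/

import Mathlib

lemma norm_combo_sq' {E : Type*} [NormedAddCommGroup E] [InnerProductSpace ℝ E]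
    (a b : ℝ) (hab : a + b = 1) (u v : E) :
    ‖a • u + b • v‖ ^ 2 = a * ‖u‖ ^ 2 + b * ‖v‖ ^ 2 - a * b * ‖u - v‖ ^ 2 := by
  have h1 : ‖a • u + b • v‖ ^ 2
      = ‖a • u‖ ^ 2 + 2 * inner ℝ (a • u) (b • v) + ‖b • v‖ ^ 2 := norm_add_sq_real _ _
  have h2 : ‖u - v‖ ^ 2 = ‖u‖ ^ 2 - 2 * inner ℝ u v + ‖v‖ ^ 2 := norm_sub_sq_real _ _
  have h3 : inner ℝ (a • u) (b • v) = a * b * inner ℝ u v := by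
    rw [real_inner_smul_left, real_inner_smul_right]; ring
  have h4 : ‖a • u‖ ^ 2 = a ^ 2 * ‖u‖ ^ 2 := by
    rw [norm_smul, Real.norm_eq_abs, mul_pow, sq_abs]
  have h5 : ‖b • v‖ ^ 2 = b ^ 2 * ‖v‖ ^ 2 := by
    rw [norm_smul, Real.norm_eq_abs, mul_pow, sq_abs]
  rw [h1, h2, h3, h4, h5]
  have hb : b = 1 - a := by linarith
  subst hb; ring

lemma three_point' {E : Type*} [NormedAddCommGroup E] [InnerProductSpace ℝ E]
    (g : E → ℝ)
    (hg : ∀ a b : ℝ, ∀ u v : E, 0 ≤ a → 0 ≤ b → a + b = 1 →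
      g (a • u + b • v) ≤ a * g u + b * g v)
    (c : ℝ) (hc : 0 < c) (p yc : E)
    (hmin : ∀ z, g p + c * ‖p - yc‖ ^ 2 ≤ g z + c * ‖z - yc‖ ^ 2) (z : E) :
    g p + c * ‖p - yc‖ ^ 2 + c * ‖z - p‖ ^ 2 ≤ g z + c * ‖z - yc‖ ^ 2 := by
  set C := c * ‖z - p‖ ^ 2 with hCdef
  have hC : 0 ≤ C := by positivity
  refine le_of_forall_pos_le_add ?_
  intro ε hε
  set t := min 1 (ε / (C + 1)) with htdef
  have ht0 : 0 < t := lt_min one_pos (by positivity)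
  have ht1 : t ≤ 1 := min_le_left _ _
  have key := hmin ((1 - t) • p + t • z)
  have hgw := hg (1 - t) t p z (by linarith) ht0.le (by ring)
  have hw : ((1 - t) • p + t • z) - yc = (1 - t) • (p - yc) + t • (z - yc) := by
    module
  have hnorm : ‖((1 - t) • p + t • z) - yc‖ ^ 2
      = (1 - t) * ‖p - yc‖ ^ 2 + t * ‖z - yc‖ ^ 2 - (1 - t) * t * ‖p - z‖ ^ 2 := by
    rw [hw, norm_combo_sq' (1 - t) t (by ring)]
    congr 3
    abel
  have h1 : g p + c * ‖p - yc‖ ^ 2 ≤ (1 - t) * g p + t * g z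
      + c * ((1 - t) * ‖p - yc‖ ^ 2 + t * ‖z - yc‖ ^ 2 - (1 - t) * t * ‖p - z‖ ^ 2) := by
    calc g p + c * ‖p - yc‖ ^ 2
        ≤ g ((1 - t) • p + t • z) + c * ‖((1 - t) • p + t • z) - yc‖ ^ 2 := key
      _ ≤ _ := by rw [hnorm]; nlinarith [hgw]
  have h2 : t * (g p + c * ‖p - yc‖ ^ 2)
      ≤ t * (g z + c * ‖z - yc‖ ^ 2 - (1 - t) * (c * ‖p - z‖ ^ 2)) := by nlinarith [h1]
  have h3 : g p + c * ‖p - yc‖ ^ 2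
      ≤ g z + c * ‖z - yc‖ ^ 2 - (1 - t) * (c * ‖p - z‖ ^ 2) :=
    le_of_mul_le_mul_left h2 ht0
  have hCD : C = c * ‖p - z‖ ^ 2 := by rw [hCdef, norm_sub_rev]
  have h4 : t * C ≤ ε := by
    calc t * C ≤ (ε / (C + 1)) * C := mul_le_mul_of_nonneg_right (min_le_right _ _) hC
      _ ≤ ε := by rw [div_mul_eq_mul_div, div_le_iff₀ (by linarith)]; nlinarith
  nlinarith [h3, h4, hCD]

set_option maxHeartbeats 1000000 in
theorem stmt_16 (n m : ℕ) (f : Fin (m + 1) → EuclideanSpace ℝ (Fin n) → ℝ)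
    (hconv : ∀ i, ConvexOn ℝ Set.univ (f i)) (hlsc : ∀ i, LowerSemicontinuous (f i))
    (α : ℝ) (hα : 1 ≤ α) (β lam : ℕ → ℝ) (hβ1 : 0 < β 1)
    (hβ : ∀ k : ℕ, 1 ≤ k →
      β (k + 1) = ((k : ℝ) * ((k : ℝ) + α - 1) / ((k : ℝ) + 1) ^ 2) * β k)
    (hlam : ∀ k : ℕ, 1 ≤ k → lam k = (k : ℝ) * β k / ((k : ℝ) + α - 1))
    (x y : ℕ → EuclideanSpace ℝ (Fin n)) (hx01 : x 0 = x 1)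
    (hy : ∀ k : ℕ, 1 ≤ k →
      y k = x k + (((k : ℝ) - 1) / ((k : ℝ) + α - 1)) • (x k - x (k - 1)))
    (hmin : ∀ k : ℕ, 1 ≤ k → ∀ z : EuclideanSpace ℝ (Fin n),
      (Finset.univ.sup' Finset.univ_nonempty (fun i => f i (x (k + 1)) - f i (x k)))
          + 1 / (2 * lam k) * ‖x (k + 1) - y k‖ ^ 2
        ≤ (Finset.univ.sup' Finset.univ_nonempty (fun i => f i z - f i (x k)))
          + 1 / (2 * lam k) * ‖z - y k‖ ^ 2) :
    ∀ i, ∀ k : ℕ, f i (x k) ≤ f i (x 0) := by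
  -- positivity of β and lam
  have hβpos : ∀ k : ℕ, 1 ≤ k → 0 < β k := by
    intro k hk
    induction k, hk using Nat.le_induction with
    | base => exact hβ1
    | succ k hk ih =>
      rw [hβ k hk]
      have hk' : (1 : ℝ) ≤ (k : ℝ) := by exact_mod_cast hk
      have h1 : (0 : ℝ) < (k : ℝ) * ((k : ℝ) + α - 1) := by nlinarith
      have h2 : (0 : ℝ) < ((k : ℝ) + 1) ^ 2 := by positivity
      exact mul_pos (div_pos h1 h2) ih
  have hlampos : ∀ k : ℕ, 1 ≤ k → 0 < lam k := by
    intro k hk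
    rw [hlam k hk]
    have hk' : (1 : ℝ) ≤ (k : ℝ) := by exact_mod_cast hk
    have := hβpos k hk
    apply div_pos (by nlinarith) (by linarith)
  -- the key per-step inequality
  have key : ∀ k : ℕ, 1 ≤ k → ∀ j,
      f j (x (k + 1)) + 1 / (2 * lam k) * ‖x (k + 1) - x k‖ ^ 2
        ≤ f j (x k)
          + 1 / (2 * lam k) * ((((k : ℝ) - 1) / ((k : ℝ) + α - 1)) ^ 2
              * ‖x k - x (k - 1)‖ ^ 2) := by
    intro k hk j
    have hlampk := hlampos k hk
    have hcpos : (0 : ℝ) < 1 / (2 * lam k) := by positivity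
    have hgcvx : ∀ a b : ℝ, ∀ u v : EuclideanSpace ℝ (Fin n), 0 ≤ a → 0 ≤ b → a + b = 1 →
        (fun z => Finset.univ.sup' Finset.univ_nonempty (fun i => f i z - f i (x k)))
            (a • u + b • v)
          ≤ a * (fun z => Finset.univ.sup' Finset.univ_nonempty
                (fun i => f i z - f i (x k))) u
            + b * (fun z => Finset.univ.sup' Finset.univ_nonempty
                (fun i => f i z - f i (x k))) v := by
      intro a b u v ha hb hab
      have hb' : b = 1 - a := by linarith
      subst hb'
      simp only
      apply Finset.sup'_le
      intro i _
      have hcv := (hconv i).2 (Set.mem_univ u) (Set.mem_univ v) ha hb hab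
      simp only [smul_eq_mul] at hcv
      have h1 : f i u - f i (x k)
          ≤ Finset.univ.sup' Finset.univ_nonempty (fun i' => f i' u - f i' (x k)) :=
        Finset.le_sup' (fun i' => f i' u - f i' (x k)) (Finset.mem_univ i)
      have h2 : f i v - f i (x k)
          ≤ Finset.univ.sup' Finset.univ_nonempty (fun i' => f i' v - f i' (x k)) :=
        Finset.le_sup' (fun i' => f i' v - f i' (x k)) (Finset.mem_univ i)
      linarith [hcv, mul_le_mul_of_nonneg_left h1 ha, mul_le_mul_of_nonneg_left h2 hb]
    have h3p := three_point'
      (fun z => Finset.univ.sup' Finset.univ_nonempty (fun i => f i z - f i (x k)))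
      hgcvx (1 / (2 * lam k)) hcpos (x (k + 1)) (y k) (fun z => hmin k hk z) (x k)
    have hg0 : Finset.univ.sup' Finset.univ_nonempty
        (fun i => f i (x k) - f i (x k)) = 0 := by
      simp only [sub_self]
      exact Finset.sup'_const _ 0
    have hxy : x k - y k
        = -((((k : ℝ) - 1) / ((k : ℝ) + α - 1)) • (x k - x (k - 1))) := by
      rw [hy k hk]; module
    have hnxy : ‖x k - y k‖ ^ 2
        = (((k : ℝ) - 1) / ((k : ℝ) + α - 1)) ^ 2 * ‖x k - x (k - 1)‖ ^ 2 := by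
      rw [hxy, norm_neg, norm_smul, Real.norm_eq_abs, mul_pow, sq_abs]
    have hsup : f j (x (k + 1)) - f j (x k)
        ≤ Finset.univ.sup' Finset.univ_nonempty (fun i => f i (x (k + 1)) - f i (x k)) :=
      Finset.le_sup' (fun i => f i (x (k + 1)) - f i (x k)) (Finset.mem_univ j)
    have hrev : ‖x k - x (k + 1)‖ = ‖x (k + 1) - x k‖ := norm_sub_rev _ _
    have hnn : (0 : ℝ) ≤ 1 / (2 * lam k) * ‖x (k + 1) - y k‖ ^ 2 := by positivity
    rw [hg0, hnxy, hrev] at h3p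
    linarith [h3p, hsup]
  -- telescoping claim
  have main : ∀ k : ℕ, 1 ≤ k → ∀ j,
      f j (x (k + 1)) + 1 / (2 * lam k) * ‖x (k + 1) - x k‖ ^ 2 ≤ f j (x 1) := by
    intro k hk
    induction k, hk using Nat.le_induction with
    | base =>
      intro j
      have h := key 1 le_rfl j
      norm_num at h ⊢
      linarith [h]
    | succ k hk ih =>
      intro j
      have h := key (k + 1) (by omega) j
      have hk1 : (k + 1 : ℕ) - 1 = k := by omega
      rw [hk1] at h
      push_cast at h
      have hK : (1 : ℝ) ≤ (k : ℝ) := by exact_mod_cast hk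
      have hlk := hlampos k hk
      have hlk1 := hlampos (k + 1) (by omega)
      have e1 : (0 : ℝ) < (k : ℝ) + α - 1 := by linarith
      have e2 : (0 : ℝ) < (k : ℝ) + α := by linarith
      have e3 : (0 : ℝ) < (k : ℝ) + 1 := by linarith
      have hb := hβpos k hk
      have hlk1eq : lam (k + 1)
          = (k : ℝ) * ((k : ℝ) + α - 1) * β k / (((k : ℝ) + 1) * ((k : ℝ) + α)) := by
        rw [hlam (k + 1) (by omega), hβ k hk]
        push_cast
        have ne1 : ((k : ℝ) + 1) ≠ 0 := by positivity
        have ne2 : ((k : ℝ) + α) ≠ 0 := ne_of_gt e2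
        have ne3 : ((k : ℝ) + 1 + α - 1) ≠ 0 := by intro hcon; nlinarith
        have ne4 : ((k : ℝ) + α - 1) ≠ 0 := ne_of_gt e1
        field_simp
        ring
      have hcore : (k : ℝ) ^ 2 * ((k : ℝ) + 1)
          ≤ ((k : ℝ) + α - 1) ^ 2 * ((k : ℝ) + α) := by
        have hd : (0 : ℝ) ≤ α - 1 := by linarith
        have hKnn : (0 : ℝ) ≤ (k : ℝ) := by linarith
        nlinarith [mul_nonneg (mul_nonneg hKnn hKnn) hd, mul_nonneg hKnn hd,
          mul_nonneg (mul_nonneg hKnn hd) hd, mul_nonneg hd hd,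
          mul_nonneg (mul_nonneg hd hd) hd]
      have hkey : ((k : ℝ) / ((k : ℝ) + α)) ^ 2 * lam k ≤ lam (k + 1) := by
        rw [hlam k hk, hlk1eq]
        rw [div_pow, div_mul_div_comm,
          div_le_div_iff₀ (by positivity) (by positivity)]
        have hmul := mul_le_mul_of_nonneg_left hcore
          (le_of_lt (mul_pos (mul_pos (Nat.cast_pos.2 (by omega) : (0:ℝ) < (k:ℝ)) e2) hb))
        ring_nf at hmul ⊢
        linarith [hmul]
      have hratio : 1 / (2 * lam (k + 1))
            * (((k : ℝ) / ((k : ℝ) + α)) ^ 2)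
          ≤ 1 / (2 * lam k) := by
        calc 1 / (2 * lam (k + 1)) * ((k : ℝ) / ((k : ℝ) + α)) ^ 2
            = ((k : ℝ) / ((k : ℝ) + α)) ^ 2 / (2 * lam (k + 1)) := by ring
          _ ≤ 1 / (2 * lam k) := by
              rw [div_le_div_iff₀ (by linarith) (by linarith)]
              linarith [hkey]
      rw [show (((k : ℝ) + 1 - 1) / ((k : ℝ) + 1 + α - 1))
          = ((k : ℝ) / ((k : ℝ) + α)) from by ring] at h
      have hN : (0 : ℝ) ≤ ‖x (k + 1) - x k‖ ^ 2 := sq_nonneg _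
      have hih := ih j
      linarith [h, hih, mul_le_mul_of_nonneg_right hratio hN]
  -- conclude
  intro i k
  match k with
  | 0 => exact le_refl _
  | 1 => rw [← hx01]
  | (k + 2) =>
    have h := main (k + 1) (by omega) i
    have hl := hlampos (k + 1) (by omega)
    have hpos : (0 : ℝ) ≤ 1 / (2 * lam (k + 1)) * ‖x (k + 1 + 1) - x (k + 1)‖ ^ 2 := by
      positivity
    rw [hx01]
    linarith
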